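/- Let λ ≠ 0, and take P = p·Id, Q = q·Id with a = b = λp². Then the normalization condition (det P)² = −(ab − tr(Q₁ᵀQ₂))² − 4(a det Q₂ + b det Q₁) + 4 tr(Adj(Q₁ᵀQ₂)) (with Q₁ = Q − (λ/2)Adj(Pᵀ), Q₂ = −Q − (λ/2)Adj(Pᵀ)) holds if and only if q² = p²(12√3|p| − 27λ²p²)/36; this has real nonzero solutions q exactly for 0 < |p| < 4√3/(9λ²). -/

import Mathlib

open Matrix Real

/-- 3×3 real matrices. -/
abbrev M3 : Type := Matrix (Fin 3) (Fin 3) ℝ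

/-- `Q₁ = Q − (λ/2)·Adj(Pᵀ)`. -/
noncomputable def nQ1 (lam : ℝ) (P Q : M3) : M3 := Q - (lam/2) • (Pᵀ).adjugate

/-- `Q₂ = −Q − (λ/2)·Adj(Pᵀ)`. -/
noncomputable def nQ2 (lam : ℝ) (P Q : M3) : M3 := -Q - (lam/2) • (Pᵀ).adjugate

/-- Normalization condition
`(det P)² = −(ab − tr(Q₁ᵀQ₂))² − 4(a det Q₂ + b det Q₁) + 4 tr(Adj(Q₁ᵀQ₂))`. -/
noncomputable def normCond (a b : ℝ) (P Q1 Q2 : M3) : Prop :=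
  P.det^2 = -(a*b - (Q1ᵀ * Q2).trace)^2 - 4*(a * Q2.det + b * Q1.det)
              + 4*((Q1ᵀ * Q2).adjugate.trace)

/-- `A = a·tr(Q₁ᵀQ₂) − 2 det Q₁ − a²b`. -/
noncomputable def torA (a b : ℝ) (Q1 Q2 : M3) : ℝ :=
  a * (Q1ᵀ * Q2).trace - 2 * Q1.det - a^2 * b

/-- `B = −(b·tr(Q₁ᵀQ₂) − 2 det Q₂ − ab²)`. -/
noncomputable def torB (a b : ℝ) (Q1 Q2 : M3) : ℝ :=
  -(b * (Q1ᵀ * Q2).trace - 2 * Q2.det - a * b^2)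

/-- `R₁ = −((ab + tr(Q₁ᵀQ₂))Q₁ − 2a·Adj(Q₂ᵀ) − 2Q₁Q₂ᵀQ₁)`. -/
noncomputable def torR1 (a b : ℝ) (Q1 Q2 : M3) : M3 :=
  -((a*b + (Q1ᵀ * Q2).trace) • Q1 - (2*a) • (Q2ᵀ).adjugate - (2:ℝ) • (Q1 * Q2ᵀ * Q1))

/-- `R₂ = (ab + tr(Q₁ᵀQ₂))Q₂ − 2b·Adj(Q₁ᵀ) − 2Q₂Q₁ᵀQ₂`. -/
noncomputable def torR2 (a b : ℝ) (Q1 Q2 : M3) : M3 :=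
  (a*b + (Q1ᵀ * Q2).trace) • Q2 - (2*b) • (Q1ᵀ).adjugate - (2:ℝ) • (Q2 * Q1ᵀ * Q2)

/-- `R = (ab + tr(Q₁ᵀQ₂))(Q₂ − Q₁) − 2(b·Adj(Q₂ᵀ) − a·Adj(Q₁ᵀ)) − 2Q₂Q₁ᵀQ₂ + 2Q₁Q₂ᵀQ₁`. -/
noncomputable def torR (a b : ℝ) (Q1 Q2 : M3) : M3 :=
  (a*b + (Q1ᵀ * Q2).trace) • (Q2 - Q1)
    - (2:ℝ) • (b • (Q2ᵀ).adjugate - a • (Q1ᵀ).adjugate)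
    - (2:ℝ) • (Q2 * Q1ᵀ * Q2) + (2:ℝ) • (Q1 * Q2ᵀ * Q1)

/-- With `P = p·Id`, `Q = q·Id`, `a = b = λp²` (and `λ ≠ 0`), the normalization condition
holds iff `q² = p²(12√3|p| − 27λ²p²)/36`, and a real nonzero solution `q` exists exactly for
`0 < |p| < 4√3/(9λ²)`. -/
lemma smul_one_eq (x : ℝ) : ∀ y : ℝ, x = y → x • (1:M3) = y • 1 := by intro y h; rw [h]

lemma nQ1_eq (lam p q : ℝ) : nQ1 lam (p • (1:M3)) (q • 1) = (q - lam*p^2/2) • 1 := by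
  unfold nQ1
  simp [Matrix.transpose_smul, Matrix.adjugate_smul, smul_smul, ← sub_smul]
  ring

lemma nQ2_eq (lam p q : ℝ) : nQ2 lam (p • (1:M3)) (q • 1) = (-q - lam*p^2/2) • 1 := by
  unfold nQ2
  simp only [Matrix.transpose_smul, Matrix.transpose_one, Matrix.adjugate_smul,
    Matrix.adjugate_one, smul_smul, ← neg_smul, ← sub_smul]
  apply smul_one_eq; simp; ring

lemma normCond_scalar (a s x y : ℝ) :
    normCond a a (s • (1:M3)) (x • 1) (y • 1) ↔
      s^6 = -(a*a - 3*(x*y))^2 - 4*(a*y^3 + a*x^3) + 12*(x*y)^2 := by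
  unfold normCond
  rw [show (x • (1:M3))ᵀ * (y • 1) = (x*y) • 1 by
        simp [Matrix.smul_mul, Matrix.mul_smul, smul_smul, mul_comm]]
  simp [Matrix.det_smul, Matrix.adjugate_smul, Matrix.trace_smul, Matrix.trace_one]
  constructor <;> intro h <;> nlinarith [h]

theorem stmt11 (lam p : ℝ) (hlam : lam ≠ 0) :
    (∀ q : ℝ,
      normCond (lam*p^2) (lam*p^2) (p • (1 : M3))
        (nQ1 lam (p • (1 : M3)) (q • (1 : M3)))
        (nQ2 lam (p • (1 : M3)) (q • (1 : M3)))
      ↔ q^2 = p^2 * (12*Real.sqrt 3*|p| - 27*lam^2*p^2) / 36) ∧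
    ((∃ q : ℝ, q ≠ 0 ∧ q^2 = p^2 * (12*Real.sqrt 3*|p| - 27*lam^2*p^2) / 36)
      ↔ (0 < |p| ∧ |p| < 4*Real.sqrt 3/(9*lam^2))) := by
  have ht : (0:ℝ) < Real.sqrt 3 := Real.sqrt_pos.mpr (by norm_num)
  have ht2 : Real.sqrt 3 ^ 2 = 3 := Real.sq_sqrt (by norm_num)
  have habs : |p|^2 = p^2 := sq_abs p
  set t := Real.sqrt 3 with htdef
  set c : ℝ := lam*p^2/2 with hcdef
  constructor
  · intro q
    rw [nQ1_eq, nQ2_eq, normCond_scalar]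
    constructor
    · intro h
      have h' : p^6 = 3*(q^2+3*c^2)^2 := by rw [hcdef]; linear_combination h
      have h2 : (3*(q^2+3*c^2))^2 = (t*(p^2*|p|))^2 := by
        linear_combination (-3)*h' + (-(p^4*|p|^2))*ht2 + (-(3*p^4))*habs
      have h3 : 3*(q^2+3*c^2) = t*(p^2*|p|) := by
        have e1 := Real.sqrt_sq (by positivity : (0:ℝ) ≤ 3*(q^2+3*c^2))
        have e2 := Real.sqrt_sq (by positivity : (0:ℝ) ≤ t*(p^2*|p|))
        rw [← e1, ← e2, h2]
      rw [hcdef] at h3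
      linear_combination h3/3
    · intro h
      have h3 : 3*(q^2+3*c^2) = t*(p^2*|p|) := by
        rw [hcdef]; linear_combination 3*h
      have hsq : (3*(q^2+3*c^2))^2 = (t*(p^2*|p|))^2 := by rw [h3]
      have h' : p^6 = 3*(q^2+3*c^2)^2 := by
        linear_combination (-(1/3))*hsq + (-(p^4*|p|^2/3))*ht2 + (-(p^4))*habs
      rw [hcdef] at h'
      linear_combination h'
  · have hl2 : (0:ℝ) < 9*lam^2 := by positivity
    constructor
    · rintro ⟨q, hq, hqeq⟩
      have hT : 0 < p^2 * (12*t*|p| - 27*lam^2*p^2) / 36 := by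
        rw [← hqeq]; positivity
      have hp : p ≠ 0 := by
        rintro rfl; simp at hT
      have hp2 : 0 < p^2 := by positivity
      have h0 : 0 < |p| := abs_pos.mpr hp
      have hX : 0 < 12*t*|p| - 27*lam^2*p^2 := by nlinarith [hT, hp2]
      refine ⟨h0, ?_⟩
      rw [lt_div_iff₀ hl2]
      nlinarith [hX, h0, habs, mul_pos h0 h0]
    · rintro ⟨h0, h1⟩
      have hp : p ≠ 0 := by simpa [abs_pos] using h0
      have hp2 : 0 < p^2 := by positivity
      rw [lt_div_iff₀ hl2] at h1
      have hX : 0 < 12*t*|p| - 27*lam^2*p^2 := by nlinarith [h1, h0, habs]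
      have hT : 0 < p^2 * (12*t*|p| - 27*lam^2*p^2) / 36 :=
        div_pos (mul_pos hp2 hX) (by norm_num)
      exact ⟨Real.sqrt _, by positivity, Real.sq_sqrt hT.le⟩
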